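/- arXiv:0905.3764 — 2 statements merged into one kernel-verified Lean document; each statement's English description precedes it below -/
import Mathlib

section
/- Let D be a finite distributive lattice in which the meet of any two join-irreducibles is either the minimum or a join-irreducible, and let χ be the Euler characteristic valuation (χ(0̂)=0, χ(s)=1 for each join-irreducible s). If x = s₁ ∨ ⋯ ∨ s_k where (s₁,...,s_k) is an antichain of join-irreducibles such that ⋀_{i∈S} sᵢ = s_{min S} ∧ s_{max S} for every nonempty S ⊆ [k] and sᵢ ∧ s_{i+1} ≠ 0̂ for all i < k, then χ(x) = 1. -/
open Finset

/-- In a finite distributive lattice where the meet of two join-irreducibles is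
the minimum or a join-irreducible, and where `χ` is the Euler characteristic
valuation, any element expressible as the join of an antichain `(s₁,...,s_k)` of
join-irreducibles with `⋀_{i∈S} sᵢ = s_{min S} ⊓ s_{max S}` for every nonempty
`S` and `sᵢ ⊓ s_{i+1} ≠ ⊥` for all `i < k` has characteristic `1`. -/
theorem chi_quasi_join_irreducible {D : Type*} [DistribLattice D] [Fintype D]
    [OrderBot D] (χ : D → ℝ) (h0 : χ ⊥ = 0)
    (hval : ∀ x y : D, χ (x ⊔ y) + χ (x ⊓ y) = χ x + χ y)
    (hji : ∀ s : D, SupIrred s → χ s = 1)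
    (hmeet : ∀ s t : D, SupIrred s → SupIrred t → s ⊓ t = ⊥ ∨ SupIrred (s ⊓ t))
    (m : ℕ) (s : Fin (m + 1) → D)
    (hirr : ∀ i, SupIrred (s i))
    (hanti : ∀ i j, i ≠ j → ¬ s i ≤ s j)
    (hS : ∀ (S : Finset (Fin (m + 1))) (h : S.Nonempty),
      S.inf' h s = s (S.min' h) ⊓ s (S.max' h))
    (hcons : ∀ i : Fin m, s i.castSucc ⊓ s i.succ ≠ ⊥) :
    χ (Finset.univ.sup s) = 1 := by
  induction m with
  | zero =>
      rw [show (Finset.univ : Finset (Fin 1)) = {0} from rfl, Finset.sup_singleton]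
      exact hji _ (hirr _)
  | succ m ih =>
      set t : Fin (m+1) → D := fun i => s i.castSucc with ht
      -- split off the last element
      have hsup : Finset.univ.sup s
          = s (Fin.last (m+1)) ⊔ (Finset.univ.sup t) := by
        rw [Fin.univ_castSuccEmb, Finset.sup_cons, Finset.sup_map]
        rfl
      -- key: t i ⊓ s (last (m+1)) ≤ t (last m) ⊓ s (last (m+1))
      have key : ∀ i : Fin (m+1), t i ⊓ s (Fin.last (m+1)) ≤
          t (Fin.last m) ⊓ s (Fin.last (m+1)) := by
        intro i
        rcases eq_or_lt_of_le (Fin.le_last i) with h | h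
        · rw [show i = Fin.last m from h]
        · set S : Finset (Fin (m+2)) :=
            {i.castSucc, (Fin.last m).castSucc, Fin.last (m+1)} with hSdef
          have hne : S.Nonempty := ⟨i.castSucc, by simp [hSdef]⟩
          have hmin : S.min' hne = i.castSucc := by
            apply le_antisymm
            · exact Finset.min'_le _ _ (by simp [hSdef])
            · apply Finset.le_min'
              intro y hy
              simp only [hSdef, Finset.mem_insert, Finset.mem_singleton] at hy
              rcases hy with rfl | rfl | rfl
              · exact le_rfl
              · exact Fin.castSucc_le_castSucc_iff.2 h.le
              · exact Fin.le_last _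
          have hmax : S.max' hne = Fin.last (m+1) := by
            apply le_antisymm
            · exact Fin.le_last _
            · exact Finset.le_max' _ _ (by simp [hSdef])
          have h1 := hS S hne
          rw [hmin, hmax] at h1
          have h2 : S.inf' hne s ≤ s ((Fin.last m).castSucc) ⊓ s (Fin.last (m+1)) :=
            le_inf (Finset.inf'_le _ (by simp [hSdef]))
              (Finset.inf'_le _ (by simp [hSdef]))
          rw [h1] at h2
          exact h2
      have hsupinf : (Finset.univ.sup t) ⊓ s (Fin.last (m+1))
          = t (Fin.last m) ⊓ s (Fin.last (m+1)) := by
        rw [Finset.sup_inf_distrib_right]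
        apply le_antisymm
        · exact Finset.sup_le fun i _ => key i
        · exact Finset.le_sup (f := fun i => t i ⊓ s (Fin.last (m+1)))
            (Finset.mem_univ (Fin.last m))
      -- the meet is sup-irreducible
      have hmne : t (Fin.last m) ⊓ s (Fin.last (m+1)) ≠ ⊥ := by
        have := hcons (Fin.last m)
        simpa using this
      have hmirr : SupIrred (t (Fin.last m) ⊓ s (Fin.last (m+1))) := by
        rcases hmeet _ _ (hirr ((Fin.last m).castSucc)) (hirr (Fin.last (m+1))) with h | h
        · exact absurd h hmne
        · exact h
      -- valuation step
      have hv := hval (Finset.univ.sup t) (s (Fin.last (m+1)))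
      rw [hsupinf] at hv
      have hχm : χ (t (Fin.last m) ⊓ s (Fin.last (m+1))) = 1 := hji _ hmirr
      have hχl : χ (s (Fin.last (m+1))) = 1 := hji _ (hirr _)
      -- apply the induction hypothesis to t
      have hrec : χ (Finset.univ.sup t) = 1 := by
        apply ih t (fun i => hirr _)
        · intro i j hij
          exact hanti _ _ (fun h => hij (Fin.castSucc_injective _ h))
        · intro S h
          have hT : (S.image Fin.castSucc).Nonempty := h.image _
          have h1 := hS (S.image Fin.castSucc) hT
          rw [Finset.inf'_image hT s] at h1
          have hmin : (S.image Fin.castSucc).min' hT = (S.min' h).castSucc := by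
            apply le_antisymm
            · exact Finset.min'_le _ _ (Finset.mem_image_of_mem _ (S.min'_mem h))
            · apply Finset.le_min'
              intro y hy
              obtain ⟨x, hx, rfl⟩ := Finset.mem_image.1 hy
              exact Fin.castSucc_le_castSucc_iff.2 (S.min'_le _ hx)
          have hmax : (S.image Fin.castSucc).max' hT = (S.max' h).castSucc := by
            apply le_antisymm
            · apply Finset.max'_le
              intro y hy
              obtain ⟨x, hx, rfl⟩ := Finset.mem_image.1 hy
              exact Fin.castSucc_le_castSucc_iff.2 (S.le_max' _ hx)
            · exact Finset.le_max' _ _ (Finset.mem_image_of_mem _ (S.max'_mem h))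
          rw [hmin, hmax] at h1
          exact h1
        · intro i
          have := hcons i.castSucc
          rw [Fin.succ_castSucc] at this
          simpa [ht] using this
      rw [hsup, sup_comm]
      have := hval (Finset.univ.sup t) (s (Fin.last (m+1)))
      rw [hsupinf, hχm, hχl, hrec] at this
      linarith
end

section
/- The rank polynomials M_n(q) of the Motzkin lattices satisfy M_{n+2}(q) = M_{n+1}(q) + Σ_{k=0}^n q^{k+1} M_k(q) M_{n-k}(q) with M_0(q) = M_1(q) = 1, where M_n(q) = Σ_{x ∈ M_n} q^{A(x)} and A(x) is the area under the Motzkin path x. -/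
/-- A Motzkin path of length `n`. -/
structure MotzkinPath (n : ℕ) where
  f : ℕ → ℕ
  init : f 0 = 0
  tail : ∀ k, n ≤ k → f k = 0
  step : ∀ k < n, (f (k + 1) : ℤ) - f k = 1 ∨ f (k + 1) = f k ∨
    (f (k + 1) : ℤ) - f k = -1

namespace MotzkinPath

/-- The area under a Motzkin path, `A(x) = Σ_{k<n} (f(k)+f(k+1))/2`;
this is the rank in the Motzkin lattice. -/
def area {n : ℕ} (x : MotzkinPath n) : ℕ :=
  (∑ k ∈ Finset.range n, (x.f k + x.f (k + 1))) / 2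

/-- The rank polynomial of the Motzkin lattice `M_n`: `M_n(q) = Σ_x q^{A(x)}`. -/
noncomputable def rankPoly (n : ℕ) : Polynomial ℚ :=
  ∑ᶠ x : MotzkinPath n, Polynomial.X ^ area x

end MotzkinPath

namespace MotzkinPath

theorem ext' {n : ℕ} {x y : MotzkinPath n} (h : ∀ k, x.f k = y.f k) : x = y := by
  cases x; cases y
  simp only [mk.injEq]
  exact funext h

theorem f_le {n : ℕ} (x : MotzkinPath n) : ∀ k, x.f k ≤ k := by
  intro k
  induction k with
  | zero => simp [x.init]
  | succ k ih =>
    by_cases h : k < n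
    · rcases x.step k h with h1 | h1 | h1 <;> omega
    · rw [x.tail (k + 1) (by omega)]; omega

instance instFinite (n : ℕ) : Finite (MotzkinPath n) := by
  apply Finite.of_injective
    (fun x : MotzkinPath n => (fun i : Fin (n + 1) =>
      (⟨x.f i, Nat.lt_of_le_of_lt (x.f_le i) i.isLt⟩ : Fin (n + 1))))
  intro x y h
  apply ext'
  intro k
  by_cases hk : k ≤ n
  · have := congrFun h ⟨k, by omega⟩
    simpa using congrArg Fin.val this
  · rw [x.tail k (by omega), y.tail k (by omega)]

noncomputable instance instFintype (n : ℕ) : Fintype (MotzkinPath n) :=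
  Fintype.ofFinite _

theorem area_eq {n : ℕ} (x : MotzkinPath n) :
    x.area = ∑ k ∈ Finset.range n, x.f k := by
  unfold area
  have h1 := Finset.sum_range_succ' x.f n
  have h2 := Finset.sum_range_succ x.f n
  have h3 : x.f n = 0 := x.tail n le_rfl
  have h4 : x.f 0 = 0 := x.init
  have h5 : ∑ k ∈ Finset.range n, (x.f k + x.f (k + 1)) =
      ∑ k ∈ Finset.range n, x.f k + ∑ k ∈ Finset.range n, x.f (k + 1) :=
    Finset.sum_add_distrib
  omega

/-- Prepend an `H` step. -/
def consH {n : ℕ} (γ : MotzkinPath (n + 1)) : MotzkinPath (n + 2) where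
  f := fun i => if i = 0 then 0 else γ.f (i - 1)
  init := by simp
  tail := by
    intro k hk
    have h0 : ¬ k = 0 := by omega
    simp only [h0, if_false]
    exact γ.tail (k - 1) (by omega)
  step := by
    intro k hk
    rcases Nat.eq_zero_or_pos k with h | h
    · subst h
      right; left
      simp [γ.init]
    · have h1 : ¬ k = 0 := by omega
      have h2 : ¬ k + 1 = 0 := by omega
      simp only [h1, h2, if_false]
      have h3 : k + 1 - 1 = (k - 1) + 1 := by omega
      rw [h3]
      exact γ.step (k - 1) (by omega)

/-- Prepend `U`, a path `a` lifted by one, and `D`, followed by `b`. -/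
def consU {n : ℕ} (k : ℕ) (hk : k ≤ n) (a : MotzkinPath k) (b : MotzkinPath (n - k)) :
    MotzkinPath (n + 2) where
  f := fun i => if i = 0 then 0 else if i ≤ k + 1 then a.f (i - 1) + 1 else b.f (i - (k + 2))
  init := by simp
  tail := by
    intro i hi
    have h0 : ¬ i = 0 := by omega
    have h1 : ¬ i ≤ k + 1 := by omega
    simp only [h0, h1, if_false]
    exact b.tail (i - (k + 2)) (by omega)
  step := by
    intro i hi
    rcases Nat.eq_zero_or_pos i with h | h
    · subst h
      left
      simp [a.init]
    · by_cases h2 : i ≤ k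
      · have e1 : ¬ i = 0 := by omega
        have e2 : i ≤ k + 1 := by omega
        have e3 : ¬ i + 1 = 0 := by omega
        have e4 : i + 1 ≤ k + 1 := by omega
        simp only [e1, e2, e3, e4, if_false, if_true, if_pos]
        have e5 : i + 1 - 1 = (i - 1) + 1 := by omega
        rw [e5]
        have hs := a.step (i - 1) (by omega)
        omega
      · by_cases h3 : i = k + 1
        · subst h3
          right; right
          have e1 : ¬ k + 1 = 0 := by omega
          have e2 : k + 1 ≤ k + 1 := le_rfl
          have e3 : ¬ k + 1 + 1 = 0 := by omega
          have e4 : ¬ k + 1 + 1 ≤ k + 1 := by omega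
          simp only [e1, e2, e3, e4, if_false, if_pos]
          have e5 : k + 1 - 1 = k := by omega
          have e6 : k + 1 + 1 - (k + 2) = 0 := by omega
          rw [e5, e6, a.tail k le_rfl, b.init]
          norm_num
        · have e1 : ¬ i = 0 := by omega
          have e2 : ¬ i ≤ k + 1 := by omega
          have e3 : ¬ i + 1 = 0 := by omega
          have e4 : ¬ i + 1 ≤ k + 1 := by omega
          simp only [e1, e2, e3, e4, if_false]
          have e5 : i + 1 - (k + 2) = (i - (k + 2)) + 1 := by omega
          rw [e5]
          exact b.step (i - (k + 2)) (by omega)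

theorem consH_f {n : ℕ} (γ : MotzkinPath (n + 1)) (i : ℕ) :
    (consH γ).f i = if i = 0 then 0 else γ.f (i - 1) := rfl

theorem consU_f {n : ℕ} (k : ℕ) (hk : k ≤ n) (a : MotzkinPath k) (b : MotzkinPath (n - k))
    (i : ℕ) : (consU k hk a b).f i =
      if i = 0 then 0 else if i ≤ k + 1 then a.f (i - 1) + 1 else b.f (i - (k + 2)) := rfl

theorem area_consH {n : ℕ} (γ : MotzkinPath (n + 1)) : (consH γ).area = γ.area := by
  rw [area_eq, area_eq]
  rw [Finset.sum_range_succ']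
  simp [consH_f]

theorem area_consU {n : ℕ} (k : ℕ) (hk : k ≤ n) (a : MotzkinPath k) (b : MotzkinPath (n - k)) :
    (consU k hk a b).area = a.area + b.area + (k + 1) := by
  rw [area_eq]
  have hsplit : Finset.range (n + 2) = Finset.range ((k + 2) + (n - k)) := by
    congr 1
    omega
  rw [hsplit, Finset.sum_range_add]
  have h1 : ∑ i ∈ Finset.range (k + 2), (consU k hk a b).f i
      = a.area + (k + 1) := by
    rw [Finset.sum_range_succ']
    have hterm : ∀ i ∈ Finset.range (k + 1),
        (consU k hk a b).f (i + 1) = a.f i + 1 := by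
      intro i hi
      rw [Finset.mem_range] at hi
      rw [consU_f]
      have e1 : ¬ i + 1 = 0 := by omega
      have e2 : i + 1 ≤ k + 1 := by omega
      simp only [e1, e2, if_false, if_pos]
      congr 1
    rw [Finset.sum_congr rfl hterm]
    rw [Finset.sum_add_distrib]
    simp only [Finset.sum_const, Finset.card_range, smul_eq_mul, mul_one]
    rw [Finset.sum_range_succ, a.tail k le_rfl]
    rw [area_eq]
    simp [consU_f]
  have h2 : ∑ i ∈ Finset.range (n - k), (consU k hk a b).f ((k + 2) + i)
      = b.area := by
    rw [area_eq]
    apply Finset.sum_congr rfl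
    intro i hi
    rw [consU_f]
    have e1 : ¬ (k + 2) + i = 0 := by omega
    have e2 : ¬ (k + 2) + i ≤ k + 1 := by omega
    simp only [e1, e2, if_false]
    congr 1
    omega
  rw [h1, h2]
  ring

/-- Decode the disjoint-union data into a Motzkin path of length `n + 2`. -/
def decode {n : ℕ} :
    (MotzkinPath (n + 1) ⊕ (Σ k : Fin (n + 1), MotzkinPath k × MotzkinPath (n - k))) →
      MotzkinPath (n + 2)
  | Sum.inl γ => consH γ
  | Sum.inr ⟨k, a, b⟩ => consU k (Nat.lt_succ_iff.mp k.isLt) a b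

theorem decode_bijective {n : ℕ} : Function.Bijective (decode (n := n)) := by
  constructor
  · -- injective
    rintro (γ₁ | ⟨k₁, a₁, b₁⟩) (γ₂ | ⟨k₂, a₂, b₂⟩) h
    · have hf : ∀ i, (consH γ₁).f i = (consH γ₂).f i := fun i =>
        congrFun (congrArg MotzkinPath.f h) i
      congr 1
      apply ext'
      intro i
      have := hf (i + 1)
      simpa [consH_f] using this
    · exfalso
      have hf := congrFun (congrArg MotzkinPath.f h) 1
      simp only [decode] at hf
      rw [consH_f, consU_f] at hf
      simp [γ₁.init] at hf
    · exfalso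
      have hf := congrFun (congrArg MotzkinPath.f h) 1
      simp only [decode] at hf
      rw [consH_f, consU_f] at hf
      simp [γ₂.init] at hf
    · simp only [decode] at h
      have hf : ∀ i, (consU (k₁ : ℕ) _ a₁ b₁).f i = (consU (k₂ : ℕ) _ a₂ b₂).f i :=
        fun i => congrFun (congrArg MotzkinPath.f h) i
      have hk : (k₁ : ℕ) = (k₂ : ℕ) := by
        by_contra hne
        rcases Nat.lt_or_ge (k₁ : ℕ) (k₂ : ℕ) with hlt | hge
        · have := hf ((k₁ : ℕ) + 2)
          rw [consU_f, consU_f] at this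
          have e1 : ¬ (k₁ : ℕ) + 2 = 0 := by omega
          have e2 : ¬ (k₁ : ℕ) + 2 ≤ (k₁ : ℕ) + 1 := by omega
          have e3 : (k₁ : ℕ) + 2 ≤ (k₂ : ℕ) + 1 := by omega
          have e4 : (k₁ : ℕ) + 2 - ((k₁ : ℕ) + 2) = 0 := by omega
          simp only [e1, e2, e3, e4, if_false, if_pos] at this
          rw [b₁.init] at this
          omega
        · have hlt : (k₂ : ℕ) < (k₁ : ℕ) := by omega
          have := hf ((k₂ : ℕ) + 2)
          rw [consU_f, consU_f] at this
          have e1 : ¬ (k₂ : ℕ) + 2 = 0 := by omega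
          have e2 : ¬ (k₂ : ℕ) + 2 ≤ (k₂ : ℕ) + 1 := by omega
          have e3 : (k₂ : ℕ) + 2 ≤ (k₁ : ℕ) + 1 := by omega
          have e4 : (k₂ : ℕ) + 2 - ((k₂ : ℕ) + 2) = 0 := by omega
          simp only [e1, e2, e3, e4, if_false, if_pos] at this
          rw [b₂.init] at this
          omega
      have hk' : k₁ = k₂ := Fin.ext hk
      subst hk'
      have ha : a₁ = a₂ := by
        apply ext'
        intro i
        by_cases hi : i < (k₁ : ℕ)
        · have := hf (i + 1)
          rw [consU_f, consU_f] at this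
          have e1 : ¬ i + 1 = 0 := by omega
          have e2 : i + 1 ≤ (k₁ : ℕ) + 1 := by omega
          simp only [e1, e2, if_false, if_pos] at this
          simpa using this
        · rw [a₁.tail i (by omega), a₂.tail i (by omega)]
      have hb : b₁ = b₂ := by
        apply ext'
        intro i
        by_cases hi : i < n - (k₁ : ℕ)
        · have := hf (i + ((k₁ : ℕ) + 2))
          rw [consU_f, consU_f] at this
          have e1 : ¬ i + ((k₁ : ℕ) + 2) = 0 := by omega
          have e2 : ¬ i + ((k₁ : ℕ) + 2) ≤ (k₁ : ℕ) + 1 := by omega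
          have e3 : i + ((k₁ : ℕ) + 2) - ((k₁ : ℕ) + 2) = i := by omega
          simp only [e1, e2, e3, if_false] at this
          exact this
        · rw [b₁.tail i (by omega), b₂.tail i (by omega)]
      rw [ha, hb]
  · -- surjective
    intro x
    have h01 : x.f 1 = 0 ∨ x.f 1 = 1 := by
      have hs : (x.f 1 : ℤ) - x.f 0 = 1 ∨ x.f 1 = x.f 0 ∨ (x.f 1 : ℤ) - x.f 0 = -1 :=
        x.step 0 (by omega)
      have h0 := x.init
      omega
    rcases h01 with h1 | h1
    · -- first step is H
      refine ⟨Sum.inl ⟨fun i => x.f (i + 1), h1, ?_, ?_⟩, ?_⟩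
      · intro i hi
        exact x.tail (i + 1) (by omega)
      · intro i hi
        exact x.step (i + 1) (by omega)
      · show consH _ = x
        apply ext'
        intro i
        rw [consH_f]
        rcases Nat.eq_zero_or_pos i with h | h
        · subst h; simp [x.init]
        · have e1 : ¬ i = 0 := by omega
          simp only [e1, if_false]
          congr 1
          omega
    · -- first step is U
      have hex : ∃ t, 2 ≤ t ∧ x.f t = 0 := ⟨n + 2, by omega, x.tail _ le_rfl⟩
      set t := Nat.find hex with ht_def
      obtain ⟨ht2, ht0⟩ := Nat.find_spec hex
      have htle : t ≤ n + 2 := Nat.find_min' hex ⟨by omega, x.tail _ le_rfl⟩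
      set k := t - 2 with hk_def
      have hkn : k ≤ n := by omega
      have hpos : ∀ j, 1 ≤ j → j < t → 1 ≤ x.f j := by
        intro j hj1 hjt
        rcases Nat.lt_or_ge j 2 with hj2 | hj2
        · have : j = 1 := by omega
          rw [this, h1]
        · have := Nat.find_min hex hjt
          omega
      have hk1 : x.f (k + 1) = 1 := by
        have hs := x.step (k + 1) (by omega)
        have hs' : x.f (k + 1 + 1) = 0 := by
          have e : k + 1 + 1 = t := by omega
          rw [e]; exact ht0
        have := hpos (k + 1) (by omega) (by omega)
        omega
      -- construct a
      let a : MotzkinPath k :=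
        { f := fun i => if i ≤ k then x.f (i + 1) - 1 else 0
          init := by simp [h1]
          tail := by
            intro i hi
            by_cases hik : i ≤ k
            · have : i = k := by omega
              subst this
              simp [hk1]
            · simp [hik]
          step := by
            intro i hi
            have e1 : i ≤ k := by omega
            have e2 : i + 1 ≤ k := by omega
            simp only [e1, e2, if_pos]
            have hs := x.step (i + 1) (by omega)
            have hp1 := hpos (i + 1) (by omega) (by omega)
            have hp2 := hpos (i + 1 + 1) (by omega) (by omega)
            omega }
      let b : MotzkinPath (n - k) :=
        { f := fun i => x.f (i + (k + 2))
          init := by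
            simp only [Nat.zero_add]
            have e : k + 2 = t := by omega
            rw [e]; exact ht0
          tail := by
            intro i hi
            exact x.tail (i + (k + 2)) (by omega)
          step := by
            intro i hi
            have e : i + 1 + (k + 2) = (i + (k + 2)) + 1 := by omega
            simp only [e]
            exact x.step (i + (k + 2)) (by omega) }
      refine ⟨Sum.inr ⟨⟨k, by omega⟩, a, b⟩, ?_⟩
      · -- decode equals x
        show consU k (by omega) a b = x
        apply ext'
        intro i
        rw [consU_f]
        rcases Nat.eq_zero_or_pos i with h | h
        · subst h; simp [x.init]
        · have e1 : ¬ i = 0 := by omega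
          by_cases h2 : i ≤ k + 1
          · have e3 : i - 1 ≤ k := by omega
            simp only [e1, h2, e3, if_false, if_pos, a]
            have e4 : i - 1 + 1 = i := by omega
            rw [e4]
            have := hpos i (by omega) (by omega)
            omega
          · simp only [e1, h2, if_false, b]
            congr 1
            omega

/-- The trivial all-zero Motzkin path. -/
def triv (n : ℕ) : MotzkinPath n where
  f := fun _ => 0
  init := rfl
  tail := fun _ _ => rfl
  step := fun _ _ => Or.inr (Or.inl rfl)

theorem rankPoly_eq_sum (n : ℕ) :
    rankPoly n = ∑ x : MotzkinPath n, Polynomial.X ^ area x := by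
  rw [rankPoly, finsum_eq_sum_of_fintype]

end MotzkinPath

open MotzkinPath Polynomial in
/-- The rank polynomials of the Motzkin lattices satisfy `M_0(q) = M_1(q) = 1`
and `M_{n+2}(q) = M_{n+1}(q) + Σ_{k=0}^n q^{k+1} M_k(q) M_{n-k}(q)`. -/
theorem motzkin_rankPoly_recurrence :
    rankPoly 0 = 1 ∧ rankPoly 1 = 1 ∧
    ∀ n : ℕ, rankPoly (n + 2) = rankPoly (n + 1) +
      ∑ k ∈ Finset.range (n + 1), X ^ (k + 1) * rankPoly k * rankPoly (n - k) := by
  refine ⟨?_, ?_, ?_⟩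
  · haveI : Unique (MotzkinPath 0) := ⟨⟨triv 0⟩, fun x => by
      apply ext'
      intro i
      exact x.tail i (Nat.zero_le i)⟩
    rw [rankPoly_eq_sum, Fintype.sum_unique]
    rw [area_eq]
    simp
  · haveI : Unique (MotzkinPath 1) := ⟨⟨triv 1⟩, fun x => by
      apply ext'
      intro i
      rcases Nat.eq_zero_or_pos i with h | h
      · subst h; exact x.init
      · exact x.tail i (by omega)⟩
    rw [rankPoly_eq_sum, Fintype.sum_unique]
    rw [area_eq]
    simp only [Finset.sum_range_one]
    rw [(default : MotzkinPath 1).init]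
    simp
  · intro n
    rw [rankPoly_eq_sum]
    rw [← Fintype.sum_bijective _ (decode_bijective (n := n))
      (fun y => X ^ area (decode y)) (fun x => X ^ area x) (fun y => rfl)]
    rw [Fintype.sum_sum_type]
    congr 1
    · rw [rankPoly_eq_sum]
      apply Finset.sum_congr rfl
      intro γ _
      rw [show decode (Sum.inl γ) = consH γ from rfl, area_consH]
    · rw [← Finset.univ_sigma_univ, Finset.sum_sigma]
      rw [← Fin.sum_univ_eq_sum_range (fun k => X ^ (k + 1) * rankPoly k * rankPoly (n - k))]
      apply Finset.sum_congr rfl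
      intro k _
      rw [Fintype.sum_prod_type]
      have hterm : ∀ (a : MotzkinPath (k : ℕ)) (b : MotzkinPath (n - (k : ℕ))),
          (X : Polynomial ℚ) ^ (decode (Sum.inr ⟨k, (a, b)⟩)).area
            = (X ^ ((k : ℕ) + 1) * X ^ a.area) * X ^ b.area := by
        intro a b
        have harea : (decode (Sum.inr ⟨k, (a, b)⟩)).area = a.area + b.area + ((k : ℕ) + 1) :=
          area_consU (k : ℕ) (Nat.lt_succ_iff.mp k.isLt) a b
        rw [harea, pow_add, pow_add]
        ring
      simp only [hterm]
      rw [← Finset.sum_mul_sum Finset.univ Finset.univ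
        (fun a : MotzkinPath (k : ℕ) => X ^ ((k : ℕ) + 1) * X ^ a.area)
        (fun b : MotzkinPath (n - (k : ℕ)) => X ^ b.area)]
      rw [← Finset.mul_sum]
      rw [rankPoly_eq_sum, rankPoly_eq_sum]
end
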